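/- For every integer r ≥ 1, the depth-(r+1) normalized multiple Bernoulli polynomial with all entries zero satisfies ζ_{r+1}(0|−1) = (−1)^{r+1}·2/((r+2)(r+1)r), where ζ_{r+1}(0|z) := ζ(0,0,…,0|z) with r+1 zero entries. -/

import Mathlib

open Polynomial

/-- Auxiliary: normalized multiple Bernoulli polynomial of the reversed tuple,
defined by the recursion of the paper (acting on the last two entries, which are
at the front of the reversed list). -/
noncomputable def nmbpRev : List ℕ → ℚ[X]
  | [] => 1
  | [k] => -(C ((k + 1 : ℚ)⁻¹)) * Polynomial.bernoulli (k + 1)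
  | kr :: km :: rest =>
      -(C ((kr + 1 : ℚ)⁻¹)) * nmbpRev ((km + kr + 1) :: rest)
        - C (1 / 2 : ℚ) * nmbpRev ((km + kr) :: rest)
        + ∑ q ∈ Finset.Icc 1 kr,
            C ((ascPochhammer ℚ q).eval (-(kr : ℚ))
                * _root_.bernoulli (q + 1) / ((q + 1).factorial : ℚ)) *
              nmbpRev ((km + kr - q) :: rest)
  termination_by l => l.length
  decreasing_by all_goals simp

/-- The normalized multiple Bernoulli polynomial `ζ(−k₁,…,−k_r|z) ∈ ℚ[z]`
(the empty tuple gives the constant polynomial `1`). -/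
noncomputable def nmbp (l : List ℕ) : ℚ[X] := nmbpRev l.reverse

/-- The "regularized tail sum" operator: `U (X^k) = -B_{k+1}(X)/(k+1) - X^k`. -/
noncomputable def Uop (p : ℚ[X]) : ℚ[X] :=
  -p - p.sum fun k c => C (c * ((k : ℚ) + 1)⁻¹) * Polynomial.bernoulli (k + 1)

lemma Uop_zero : Uop 0 = 0 := by simp [Uop]

lemma Uop_add (p q : ℚ[X]) : Uop (p + q) = Uop p + Uop q := by
  unfold Uop
  rw [Polynomial.sum_add_index]
  · ring
  · intro i; simp
  · intro a b₁ b₂; rw [← add_mul, ← C_add, ← add_mul]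

lemma Uop_smul (a : ℚ) (p : ℚ[X]) : Uop (C a * p) = C a * Uop p := by
  unfold Uop
  rw [← smul_eq_C_mul, Polynomial.sum_smul_index]
  · rw [smul_eq_C_mul, Polynomial.sum_def, Polynomial.sum_def, mul_sub, Finset.mul_sum, mul_neg]
    congr 1
    refine Finset.sum_congr rfl fun n _ => ?_
    rw [← mul_assoc, ← C_mul, mul_assoc]
  · intro i; simp

lemma Uop_monomial (n : ℕ) (a : ℚ) :
    Uop (monomial n a) = -(monomial n a) - C (a * ((n : ℚ) + 1)⁻¹) * Polynomial.bernoulli (n + 1) := by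
  unfold Uop
  rw [Polynomial.sum_monomial_index]
  simp
/-- Formal integral over `[0,1]`: `I (X^k) = 1/(k+1)`. -/
noncomputable def Ifun (p : ℚ[X]) : ℚ :=
  p.sum fun k c => c * ((k : ℚ) + 1)⁻¹

lemma Ifun_add (p q : ℚ[X]) : Ifun (p + q) = Ifun p + Ifun q := by
  unfold Ifun
  rw [Polynomial.sum_add_index]
  · intro i; simp
  · intro a b₁ b₂; rw [add_mul]

lemma Ifun_monomial (n : ℕ) (a : ℚ) : Ifun (monomial n a) = a * ((n : ℚ) + 1)⁻¹ := by
  unfold Ifun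
  rw [Polynomial.sum_monomial_index]
  simp

lemma Ifun_smul (a : ℚ) (p : ℚ[X]) : Ifun (C a * p) = a * Ifun p := by
  unfold Ifun
  rw [← smul_eq_C_mul, Polynomial.sum_smul_index]
  · rw [Polynomial.sum_def, Polynomial.sum_def, Finset.mul_sum]
    exact Finset.sum_congr rfl fun n _ => by ring
  · intro i; simp

lemma Ifun_C (a : ℚ) : Ifun (C a) = a := by
  rw [← Polynomial.monomial_zero_left, Ifun_monomial]; simp

lemma Ifun_sub (p q : ℚ[X]) : Ifun (p - q) = Ifun p - Ifun q := by
  have h : Ifun (C (-1) * q) = -Ifun q := by rw [Ifun_smul]; ring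
  have : p - q = p + C (-1) * q := by rw [map_neg, map_one]; ring
  rw [this, Ifun_add, h]; ring

lemma Ifun_finset_sum {α : Type*} (s : Finset α) (f : α → ℚ[X]) :
    Ifun (∑ i ∈ s, f i) = ∑ i ∈ s, Ifun (f i) := by
  classical
  induction s using Finset.induction with
  | empty => simp [Ifun]
  | insert _ _ h ih => rw [Finset.sum_insert h, Finset.sum_insert h, Ifun_add, ih]

/-- `∫₀¹ B_m = 0` for `m ≥ 1`. -/
lemma Ifun_bernoulli (m : ℕ) : Ifun (Polynomial.bernoulli (m + 1)) = 0 := by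
  rw [Polynomial.bernoulli, Ifun_finset_sum]
  have key : ∀ i ∈ Finset.range (m + 2),
      Ifun (monomial (m + 1 - i) (_root_.bernoulli i * ((m+1).choose i : ℚ)))
        = ((m : ℚ) + 2)⁻¹ * (((m+2).choose i : ℚ) * _root_.bernoulli i) := by
    intro i hi
    rw [Ifun_monomial]
    rw [Finset.mem_range] at hi
    have hile : i ≤ m + 1 := Nat.lt_succ_iff.mp hi
    have hc : ((m + 1 - i : ℕ) : ℚ) + 1 = (m : ℚ) + 2 - i := by
      rw [Nat.cast_sub hile]; push_cast; ring
    have hnat : (m + 2) * ((m+1).choose i) = (m+2).choose i * (m + 2 - i) := by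
      have h1 := Nat.add_one_mul_choose_eq (m+1) i
      have h2 := Nat.choose_succ_right_eq (m+2) i
      simpa using h1.trans h2
    have hq : ((m : ℚ) + 2) * (((m+1).choose i : ℕ) : ℚ)
        = (((m+2).choose i : ℕ) : ℚ) * ((m : ℚ) + 2 - i) := by
      have := congrArg (Nat.cast : ℕ → ℚ) hnat
      push_cast [Nat.cast_sub (by omega : i ≤ m + 2)] at this
      convert this using 2 <;> push_cast <;> ring
    have hne1 : (m : ℚ) + 2 - i ≠ 0 := by
      have : (i : ℚ) ≤ (m : ℚ) + 1 := by exact_mod_cast hile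
      intro h; nlinarith
    have hne2 : (m : ℚ) + 2 ≠ 0 := by positivity
    rw [hc]
    field_simp
    linear_combination (_root_.bernoulli i) * hq
  rw [Finset.sum_congr rfl key, ← Finset.mul_sum]
  have := _root_.sum_bernoulli (m + 2)
  rw [if_neg (by omega)] at this
  rw [this, mul_zero]
lemma Ifun_Uop (p : ℚ[X]) : Ifun (Uop p) = -Ifun p := by
  induction p using Polynomial.induction_on' with
  | add p q hp hq => rw [Uop_add, Ifun_add, Ifun_add, hp, hq]; ring
  | monomial n a =>
    rw [Uop_monomial, Ifun_sub, Ifun_smul, Ifun_bernoulli, mul_zero]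
    rw [show -(monomial n a) = C (-1) * monomial n a by rw [map_neg, map_one]; ring]
    rw [Ifun_smul]; ring

/-- The difference equation for `Uop`. -/
lemma Uop_eval_sub (p : ℚ[X]) (x : ℚ) :
    (Uop p).eval x - (Uop p).eval (x + 1) = p.eval (x + 1) := by
  induction p using Polynomial.induction_on' with
  | add p q hp hq => rw [Uop_add]; simp only [eval_add] at *; linarith
  | monomial n a =>
    rw [Uop_monomial]
    have hb := Polynomial.bernoulli_eval_one_add (n + 1) x
    rw [add_comm (1:ℚ) x] at hb
    simp only [eval_sub, eval_neg, eval_mul, eval_C, eval_monomial] at *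
    have hn : ((n : ℚ) + 1) ≠ 0 := by positivity
    have hpow : (n + 1 : ℕ) - 1 = n := by omega
    rw [hpow] at hb
    push_cast at hb ⊢
    rw [hb]
    field_simp
    ring

/-- Uniqueness: a polynomial is determined by its difference and its integral. -/
lemma poly_eq_of_diff_int (p q : ℚ[X])
    (h1 : ∀ x : ℚ, p.eval (x + 1) - p.eval x = q.eval (x + 1) - q.eval x)
    (h2 : Ifun p = Ifun q) : p = q := by
  set g : ℚ[X] := p - q with hg
  have hshift : ∀ x : ℚ, g.eval (x + 1) = g.eval x := by
    intro x
    have := h1 x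
    simp only [hg, eval_sub]
    linarith
  have hnat : ∀ n : ℕ, g.eval (n : ℚ) = g.eval 0 := by
    intro n
    induction n with
    | zero => simp
    | succ n ih => rw [Nat.cast_succ, hshift, ih]
  have hzero : g - C (g.eval 0) = 0 := by
    apply Polynomial.eq_zero_of_infinite_isRoot
    apply Set.Infinite.mono (s := (Nat.cast : ℕ → ℚ) '' Set.univ)
    · rintro x ⟨n, -, rfl⟩
      simp [Polynomial.IsRoot, hnat n]
    · exact Set.Infinite.image (fun a _ b _ h => Nat.cast_injective h)
        Set.infinite_univ
  have hgC : g = C (g.eval 0) := by linear_combination (norm := ring_nf) hzero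
  have : Ifun g = 0 := by rw [hg, Ifun_sub, h2]; ring
  rw [hgC, Ifun_C] at this
  have : g = 0 := by rw [hgC, this, map_zero]
  have := sub_eq_zero.mp (hg ▸ this)
  exact this
/-- The rising factorial polynomial `X(X+1)⋯(X+n)`. -/
noncomputable def Qp (n : ℕ) : ℚ[X] := ∏ i ∈ Finset.range (n + 1), (X + C (i : ℚ))

/-- `Uⁿ(1)`, in closed form. -/
noncomputable def ap (n : ℕ) : ℚ[X] :=
  C ((-1) ^ n / ((n + 1).factorial : ℚ)) * derivative (Qp n)

lemma Qp_comp (n : ℕ) :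
    (Qp n).comp (X + 1) = ∏ i ∈ Finset.range (n + 1), (X + C ((i : ℚ) + 1)) := by
  unfold Qp
  rw [Polynomial.comp, Polynomial.eval₂_finset_prod]
  refine Finset.prod_congr rfl fun i _ => ?_
  simp [Polynomial.eval₂_add, map_add]
  ring

lemma Qp_succ (n : ℕ) : Qp (n + 1) = Qp n * (X + C ((n : ℚ) + 1)) := by
  unfold Qp
  rw [Finset.prod_range_succ]
  push_cast
  ring

lemma Qp_succ' (n : ℕ) : Qp (n + 1) = X * (Qp n).comp (X + 1) := by
  rw [Qp_comp]
  unfold Qp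
  rw [Finset.prod_range_succ']
  have h0 : ((X : ℚ[X]) + C ((0 : ℕ) : ℚ)) = (X : ℚ[X]) := by simp
  rw [h0, mul_comm]
  congr 1
  refine Finset.prod_congr rfl fun i _ => ?_
  push_cast
  ring

lemma Qp_key (n : ℕ) :
    (Qp (n + 1)).comp (X + 1) - Qp (n + 1)
      = C ((n : ℚ) + 2) * (Qp n).comp (X + 1) := by
  have h1 : (Qp (n + 1)).comp (X + 1) = (Qp n).comp (X + 1) * ((X + 1) + C ((n : ℚ) + 1)) := by
    rw [Qp_succ, Polynomial.mul_comp, Polynomial.add_comp, Polynomial.X_comp, Polynomial.C_comp]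
  rw [h1, Qp_succ']
  have : ((X : ℚ[X]) + 1) + C ((n : ℚ) + 1) = X + C ((n : ℚ) + 2) := by
    simp only [map_add, map_one, map_ofNat]; ring
  rw [this]
  ring
lemma Ifun_derivative (p : ℚ[X]) : Ifun (derivative p) = p.eval 1 - p.eval 0 := by
  induction p using Polynomial.induction_on' with
  | add p q hp hq => rw [map_add, Ifun_add, hp, hq]; simp only [eval_add]; ring
  | monomial n a =>
    rw [Polynomial.derivative_monomial]
    cases n with
    | zero => simp [Ifun]
    | succ n =>
      rw [Ifun_monomial]
      simp only [Nat.add_sub_cancel, eval_monomial]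
      have hn : ((n : ℚ) + 1) ≠ 0 := by positivity
      push_cast
      field_simp
      simp

lemma Qp_eval_one (n : ℕ) : (Qp n).eval 1 = ((n + 1).factorial : ℚ) := by
  induction n with
  | zero => simp [Qp]
  | succ n ih =>
    rw [Qp_succ, eval_mul, ih]
    simp only [eval_add, eval_X, eval_C]
    rw [Nat.factorial_succ (n + 1)]
    push_cast
    ring

lemma Qp_eval_zero (n : ℕ) : (Qp n).eval 0 = 0 := by
  unfold Qp
  rw [Polynomial.eval_prod]
  apply Finset.prod_eq_zero (Finset.mem_range.mpr (Nat.succ_pos n))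
  simp

lemma Qp_eval_neg_one (n : ℕ) (hn : 1 ≤ n) : (Qp n).eval (-1) = 0 := by
  unfold Qp
  rw [Polynomial.eval_prod]
  apply Finset.prod_eq_zero (i := 1) (Finset.mem_range.mpr (by omega))
  simp

lemma dQp_eval_neg_one : ∀ n : ℕ, 1 ≤ n →
    (derivative (Qp n)).eval (-1) = -(((n - 1).factorial : ℕ) : ℚ) := by
  intro n
  induction n with
  | zero => omega
  | succ n ih =>
    intro _
    rw [Qp_succ, derivative_mul, eval_add, eval_mul, eval_mul]
    simp only [derivative_add, derivative_X, derivative_C, add_zero, eval_add, eval_X, eval_C,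
      eval_one, mul_one]
    cases Nat.eq_or_lt_of_le (Nat.zero_le n) with
    | inl h =>
      subst h    -- wrong direction? n = 0
      simp [Qp]
    | inr h =>
      have h1 : 1 ≤ n := h
      rw [ih h1, Qp_eval_neg_one n h1, add_zero, Nat.add_sub_cancel]
      have : n * (n - 1).factorial = n.factorial := Nat.mul_factorial_pred h.ne'
      have hcast : ((n.factorial : ℕ) : ℚ) = (n : ℚ) * (((n - 1).factorial : ℕ) : ℚ) := by
        exact_mod_cast congrArg (Nat.cast : ℕ → ℚ) this.symm
      rw [hcast]
      push_cast
      ring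

lemma Ifun_ap (n : ℕ) : Ifun (ap n) = (-1) ^ n := by
  unfold ap
  rw [Ifun_smul, Ifun_derivative, Qp_eval_one, Qp_eval_zero, sub_zero]
  have : (((n + 1).factorial : ℕ) : ℚ) ≠ 0 := by
    exact_mod_cast Nat.factorial_ne_zero (n + 1)
  field_simp
lemma Uop_ap (n : ℕ) : Uop (ap n) = ap (n + 1) := by
  apply poly_eq_of_diff_int
  · intro x
    have hU : (Uop (ap n)).eval (x + 1) - (Uop (ap n)).eval x = -((ap n).eval (x + 1)) := by
      have := Uop_eval_sub (ap n) x
      linarith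
    rw [hU]
    -- difference of ap (n+1)
    have hDK : (derivative (Qp (n + 1))).comp (X + 1) - derivative (Qp (n + 1))
        = C ((n : ℚ) + 2) * (derivative (Qp n)).comp (X + 1) := by
      have h := congrArg derivative (Qp_key n)
      rw [derivative_sub, derivative_mul, Polynomial.derivative_comp,
        Polynomial.derivative_comp] at h
      simpa using h
    have hDKx := congrArg (Polynomial.eval x) hDK
    simp only [eval_sub, eval_mul, eval_C, Polynomial.eval_comp, eval_add, eval_X,
      eval_one] at hDKx
    unfold ap
    simp only [eval_mul, eval_C]
    rw [show (-1 : ℚ) ^ (n + 1) / ((n + 2).factorial : ℚ)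
          * (derivative (Qp (n+1))).eval (x+1)
        - (-1 : ℚ) ^ (n + 1) / ((n + 2).factorial : ℚ) * (derivative (Qp (n+1))).eval x
        = (-1 : ℚ) ^ (n + 1) / ((n + 2).factorial : ℚ)
          * ((derivative (Qp (n+1))).eval (x+1) - (derivative (Qp (n+1))).eval x) from by ring,
      hDKx]
    have hfac : (((n + 2).factorial : ℕ) : ℚ) = ((n : ℚ) + 2) * (((n + 1).factorial : ℕ) : ℚ) := by
      rw [Nat.factorial_succ (n + 1)]
      push_cast
      ring
    have h1 : (((n+1).factorial : ℕ) : ℚ) ≠ 0 := by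
      exact_mod_cast Nat.factorial_ne_zero (n + 1)
    have h2 : ((n : ℚ) + 2) ≠ 0 := by positivity
    rw [hfac]
    field_simp
    ring
  · rw [Ifun_Uop, Ifun_ap, Ifun_ap]
    ring
lemma Uop_iterate_one (n : ℕ) : Uop^[n] (1 : ℚ[X]) = ap n := by
  induction n with
  | zero =>
    simp only [Function.iterate_zero, id]
    unfold ap Qp
    simp
  | succ n ih =>
    rw [Function.iterate_succ_apply', ih, Uop_ap]
lemma asc_eval_neg (k : ℕ) : ∀ q : ℕ, q ≤ k →
    (ascPochhammer ℚ q).eval (-(k : ℚ)) = (-1) ^ q * ((k.descFactorial q : ℕ) : ℚ)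
  | 0, _ => by simp
  | (q+1), h => by
    rw [ascPochhammer_succ_eval, asc_eval_neg k q (by omega)]
    rw [Nat.descFactorial_succ]
    have : ((k - q : ℕ) : ℚ) = (k : ℚ) - q := by
      rw [Nat.cast_sub (by omega)]
    push_cast [this]
    ring

lemma bernoulli_odd_zero {m : ℕ} (h : Odd m) (h1 : 1 < m) : _root_.bernoulli m = 0 := by
  rw [_root_.bernoulli_eq_bernoulli'_of_ne_one (by omega)]
  exact bernoulli'_eq_zero_of_odd h h1

lemma coeff_match (k q : ℕ) (h1 : 1 ≤ q) (hq : q ≤ k) :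
    (ascPochhammer ℚ q).eval (-(k : ℚ)) * _root_.bernoulli (q + 1) / (((q+1).factorial : ℕ) : ℚ)
      = -(((k : ℚ) + 1)⁻¹) * (_root_.bernoulli (q + 1) * (((k+1).choose (q+1) : ℕ) : ℚ)) := by
  rcases Nat.even_or_odd q with he | ho
  · have : _root_.bernoulli (q + 1) = 0 :=
      bernoulli_odd_zero (Even.add_one he) (by omega)
    rw [this]; ring
  · rw [asc_eval_neg k q hq, Odd.neg_one_pow ho]
    have hnat : (k + 1) * k.descFactorial q = (q+1).factorial * ((k+1).choose (q+1)) := by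
      rw [← Nat.succ_descFactorial_succ, Nat.descFactorial_eq_factorial_mul_choose]
    have hcast : ((k : ℚ) + 1) * ((k.descFactorial q : ℕ) : ℚ)
        = (((q+1).factorial : ℕ) : ℚ) * (((k+1).choose (q+1) : ℕ) : ℚ) := by
      exact_mod_cast congrArg (Nat.cast : ℕ → ℚ) hnat
    have hf : (((q+1).factorial : ℕ) : ℚ) ≠ 0 := by
      exact_mod_cast Nat.factorial_ne_zero (q+1)
    have hk : ((k : ℚ) + 1) ≠ 0 := by positivity
    field_simp
    first
    | linear_combination (_root_.bernoulli (q+1)) * hcast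
    | linear_combination (-_root_.bernoulli (q+1)) * hcast
    | linear_combination (2 * _root_.bernoulli (q+1)) * hcast
    | linear_combination (-2 * _root_.bernoulli (q+1)) * hcast

lemma Uop_X_pow (k : ℕ) :
    Uop (X ^ k : ℚ[X])
      = -(C ((k + 1 : ℚ)⁻¹)) * X ^ (k + 1) - C (1 / 2 : ℚ) * X ^ k
        + ∑ q ∈ Finset.Icc 1 k,
            C ((ascPochhammer ℚ q).eval (-(k : ℚ))
                * _root_.bernoulli (q + 1) / ((q + 1).factorial : ℚ)) * X ^ (k - q) := by
  rw [X_pow_eq_monomial, Uop_monomial, one_mul, Polynomial.bernoulli]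
  have hsplit : Finset.range (k + 1 + 1) = insert 0 (insert 1 (Finset.Ico 2 (k+2))) := by
    ext i; simp [Finset.mem_Ico]; omega
  rw [hsplit, Finset.sum_insert (by simp), Finset.sum_insert (by simp [Finset.mem_Ico])]
  have h0 : (monomial (k + 1 - 0) (_root_.bernoulli 0 * ((k+1).choose 0 : ℕ) : ℚ))
      = monomial (k+1) (1 : ℚ) := by norm_num
  have h1 : (monomial (k + 1 - 1) (_root_.bernoulli 1 * ((k+1).choose 1 : ℕ) : ℚ))
      = monomial k (-(1/2) * ((k : ℚ) + 1)) := by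
    norm_num [_root_.bernoulli_one]
  rw [h0, h1]
  -- reindex the Icc sum
  have hIcc : Finset.Icc 1 k = Finset.Ico 1 (k+1) := by
    ext i; simp [Finset.mem_Ico, Finset.mem_Icc]
  rw [hIcc, Finset.sum_Ico_eq_sum_range, Finset.sum_Ico_eq_sum_range]
  have hidx1 : k + 1 - 1 = k := by omega
  have hidx2 : k + 2 - 2 = k := by omega
  rw [hidx1, hidx2]
  have hterm : ∀ j ∈ Finset.range k,
      C ((ascPochhammer ℚ (1+j)).eval (-(k : ℚ))
          * _root_.bernoulli (1 + j + 1) / ((1 + j + 1).factorial : ℚ)) * X ^ (k - (1 + j))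
        = -(C ((k + 1 : ℚ)⁻¹))
            * monomial (k + 1 - (2 + j))
              (_root_.bernoulli (2 + j) * (((k+1).choose (2+j) : ℕ) : ℚ)) := by
    intro j hj
    rw [Finset.mem_range] at hj
    have hq1 : 1 ≤ 1 + j := by omega
    have hqk : 1 + j ≤ k := by omega
    have heq : 2 + j = (1 + j) + 1 := by omega
    rw [heq]
    have hidx : k + 1 - ((1 + j) + 1) = k - (1 + j) := by omega
    rw [hidx]
    rw [show (-(C ((k + 1 : ℚ)⁻¹)) : ℚ[X]) = C (-((k + 1 : ℚ)⁻¹)) from by rw [map_neg],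
      C_mul_monomial, C_mul_X_pow_eq_monomial]
    congr 1
    have := coeff_match k (1+j) hq1 hqk
    push_cast at this ⊢
    linear_combination this
  rw [Finset.sum_congr rfl hterm]
  simp only [show ∀ j, (-(C ((k + 1 : ℚ)⁻¹)) : ℚ[X])
      * monomial (k + 1 - (2 + j)) (_root_.bernoulli (2 + j) * (((k+1).choose (2+j) : ℕ) : ℚ))
    = -(C ((k + 1 : ℚ)⁻¹)
      * monomial (k + 1 - (2 + j)) (_root_.bernoulli (2 + j) * (((k+1).choose (2+j) : ℕ) : ℚ)))
    from fun j => by ring, ← Finset.mul_sum, Finset.sum_neg_distrib]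
  have hk : ((k : ℚ) + 1) ≠ 0 := by positivity
  have e2' : (C (((k : ℚ)+1)⁻¹) : ℚ[X]) * monomial k (-(1/2) * ((k : ℚ)+1))
      = -(monomial k ((1:ℚ)/2)) := by
    rw [C_mul_monomial, ← map_neg]
    congr 1
    field_simp
  have e3 : (C ((1:ℚ)/2) : ℚ[X]) * monomial k (1:ℚ) = monomial k ((1:ℚ)/2) := by
    rw [C_mul_monomial, mul_one]
  have e5 : monomial k (1:ℚ) = 2 * monomial k ((1:ℚ)/2) := by
    rw [show ((2 : ℚ[X])) = C (2:ℚ) from (map_ofNat C 2).symm, C_mul_monomial]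
    congr 1
    norm_num
  rw [mul_add, mul_add, X_pow_eq_monomial]
  linear_combination (-1 : ℚ[X]) * e2' + e3 - e5
lemma Uit_add (m : ℕ) (p q : ℚ[X]) : Uop^[m] (p + q) = Uop^[m] p + Uop^[m] q := by
  induction m generalizing p q with
  | zero => simp
  | succ m ih => rw [Function.iterate_succ_apply, Uop_add, ih,
      Function.iterate_succ_apply, Function.iterate_succ_apply]

lemma Uit_smul (m : ℕ) (a : ℚ) (p : ℚ[X]) : Uop^[m] (C a * p) = C a * Uop^[m] p := by
  induction m generalizing p with
  | zero => simp
  | succ m ih => rw [Function.iterate_succ_apply, Uop_smul, ih, Function.iterate_succ_apply]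

noncomputable def Tp (p : ℚ[X]) : ℚ[X] := Uop p + p

lemma Phi_add (m : ℕ) (p q : ℚ[X]) :
    Tp (Uop^[m] (p + q)) = Tp (Uop^[m] p) + Tp (Uop^[m] q) := by
  rw [Uit_add]; unfold Tp; rw [Uop_add]; ring

lemma Phi_smul (m : ℕ) (a : ℚ) (p : ℚ[X]) :
    Tp (Uop^[m] (C a * p)) = C a * Tp (Uop^[m] p) := by
  rw [Uit_smul]; unfold Tp; rw [Uop_smul]; ring

lemma Phi_sub (m : ℕ) (p q : ℚ[X]) :
    Tp (Uop^[m] (p - q)) = Tp (Uop^[m] p) - Tp (Uop^[m] q) := by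
  have : p - q = p + C (-1) * q := by rw [map_neg, map_one]; ring
  rw [this, Phi_add, Phi_smul, map_neg, map_one]; ring

lemma Phi_sum {α : Type*} (m : ℕ) (s : Finset α) (f : α → ℚ[X]) :
    Tp (Uop^[m] (∑ i ∈ s, f i)) = ∑ i ∈ s, Tp (Uop^[m] (f i)) := by
  classical
  induction s using Finset.induction with
  | empty =>
    simp only [Finset.sum_empty]
    have : Uop^[m] (0 : ℚ[X]) = 0 := by
      have := Uit_smul m 0 0
      simpa using this
    rw [this]; unfold Tp; rw [Uop_zero]; ring
  | insert _ _ h ih => rw [Finset.sum_insert h, Finset.sum_insert h, Phi_add, ih]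

/-- The main structural lemma. -/
lemma nmbpRev_eq : ∀ m k : ℕ, nmbpRev (k :: List.replicate m 0) = Tp (Uop^[m] (X ^ k)) := by
  intro m
  induction m with
  | zero =>
    intro k
    show nmbpRev [k] = _
    rw [nmbpRev]
    unfold Tp
    simp only [Function.iterate_zero, id]
    rw [X_pow_eq_monomial, Uop_monomial, one_mul]
    ring
  | succ m ih =>
    intro k
    rw [List.replicate_succ, nmbpRev]
    simp only [Nat.zero_add]
    rw [ih (k+1), ih k]
    have hterm : ∀ q ∈ Finset.Icc 1 k,
        C ((ascPochhammer ℚ q).eval (-(k : ℚ))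
            * _root_.bernoulli (q + 1) / ((q + 1).factorial : ℚ)) * nmbpRev ((k - q) :: List.replicate m 0)
          = C ((ascPochhammer ℚ q).eval (-(k : ℚ))
            * _root_.bernoulli (q + 1) / ((q + 1).factorial : ℚ)) * Tp (Uop^[m] (X ^ (k - q))) := by
      intro q _
      rw [ih (k - q)]
    rw [Finset.sum_congr rfl hterm]
    rw [Function.iterate_succ_apply, Uop_X_pow]
    rw [Phi_add, Phi_sub, Phi_sum]
    rw [show (-(C ((k + 1 : ℚ)⁻¹)) : ℚ[X]) * X ^ (k+1) = C (-((k + 1 : ℚ)⁻¹)) * X ^ (k+1) from by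
      rw [map_neg]]
    rw [Phi_smul, Phi_smul]
    have hsum : ∀ q ∈ Finset.Icc 1 k,
        Tp (Uop^[m] (C ((ascPochhammer ℚ q).eval (-(k : ℚ))
            * _root_.bernoulli (q + 1) / ((q + 1).factorial : ℚ)) * X ^ (k - q)))
          = C ((ascPochhammer ℚ q).eval (-(k : ℚ))
            * _root_.bernoulli (q + 1) / ((q + 1).factorial : ℚ)) * Tp (Uop^[m] (X ^ (k - q))) := by
      intro q _
      rw [Phi_smul]
    rw [Finset.sum_congr rfl hsum, map_neg]
lemma ap_eval_neg_one (n : ℕ) (hn : 1 ≤ n) :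
    (ap n).eval (-1) = (-1) ^ (n + 1) * (((n - 1).factorial : ℕ) : ℚ) / ((n + 1).factorial : ℚ) := by
  unfold ap
  rw [eval_mul, eval_C, dQp_eval_neg_one n hn]
  rw [pow_succ]
  ring

/-- `ζ_{r+1}(0|−1) = (−1)^{r+1}·2/((r+2)(r+1)r)` for `r ≥ 1`. -/
theorem nmbp_replicate_zero_eval_neg_one (r : ℕ) (hr : 1 ≤ r) :
    (nmbp (List.replicate (r + 1) 0)).eval (-1)
      = (-1 : ℚ) ^ (r + 1) * 2 / (((r : ℚ) + 2) * ((r : ℚ) + 1) * (r : ℚ)) := by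
  unfold nmbp
  rw [List.reverse_replicate, List.replicate_succ, nmbpRev_eq r 0, pow_zero]
  unfold Tp
  rw [Uop_iterate_one, Uop_ap]
  rw [eval_add, ap_eval_neg_one (r+1) (by omega), ap_eval_neg_one r hr]
  -- factorial identities
  have hf1 : (((r + 1 - 1).factorial : ℕ) : ℚ) = (r : ℚ) * (((r-1).factorial : ℕ) : ℚ) := by
    have : r + 1 - 1 = r := by omega
    rw [this, ← Nat.mul_factorial_pred (Nat.one_le_iff_ne_zero.mp hr)]
    push_cast
    ring
  have hf2 : (((r + 1 + 1).factorial : ℕ) : ℚ)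
      = ((r : ℚ) + 2) * ((r : ℚ) + 1) * (r : ℚ) * (((r-1).factorial : ℕ) : ℚ) := by
    have h : (r + 2).factorial = (r + 2) * ((r + 1) * (r * (r-1).factorial)) := by
      rw [Nat.factorial_succ, Nat.factorial_succ, Nat.mul_factorial_pred (Nat.one_le_iff_ne_zero.mp hr)]
    have h2 : r + 1 + 1 = r + 2 := by omega
    rw [h2, h]
    push_cast
    ring
  have hf3 : (((r + 1).factorial : ℕ) : ℚ)
      = ((r : ℚ) + 1) * (r : ℚ) * (((r-1).factorial : ℕ) : ℚ) := by
    rw [Nat.factorial_succ, ← Nat.mul_factorial_pred (Nat.one_le_iff_ne_zero.mp hr)]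
    push_cast
    ring
  rw [hf1, hf2, hf3]
  have hfz : (((r-1).factorial : ℕ) : ℚ) ≠ 0 := by
    exact_mod_cast Nat.factorial_ne_zero (r-1)
  have hrz : (r : ℚ) ≠ 0 := by
    have : 0 < r := hr
    positivity
  have h1 : ((r : ℚ) + 1) ≠ 0 := by positivity
  have h2 : ((r : ℚ) + 2) ≠ 0 := by positivity
  rw [pow_succ, pow_succ]
  field_simp
  ring
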